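/- Let G be a graph, C ⊆ V(G) a clique of size |C| ≥ 2, and let G' be obtained from G by contracting C to a vertex u_C and adding a pendant neighbor v_C of u_C. Then the minimum size of a connected vertex cover of G is at least the minimum size of a connected vertex cover of G' plus |C| − 2. -/

import Mathlib

/-- `X` is a vertex cover of `G`: every edge has at least one endpoint in `X`. -/
def IsVertexCover {V : Type*} (G : SimpleGraph V) (X : Set V) : Prop :=
  ∀ ⦃u v : V⦄, G.Adj u v → u ∈ X ∨ v ∈ X

/-- `X` is a connected vertex cover of `G`. -/
def IsConnectedVertexCover {V : Type*} (G : SimpleGraph V) (X : Set V) : Prop :=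
  IsVertexCover G X ∧ (G.induce X).Connected

/-- The graph obtained from `G` by contracting the set `C` to a single vertex `u_C`
(represented by `some none`) and attaching a new pendant vertex `v_C`
(represented by `none`) adjacent only to `u_C`. -/
def contractCliquePendant {V : Type*} (G : SimpleGraph V) (C : Set V) :
    SimpleGraph (Option (Option {v : V // v ∉ C})) :=
  SimpleGraph.fromRel (fun x y =>
    match x, y with
    | some (some a), some (some b) => G.Adj a.1 b.1
    | some none, some (some a) => ∃ s ∈ C, G.Adj s a.1
    | none, some none => True
    | _, _ => False)

/-- Contracting a clique `C` of size at least 2 (and adding a pendant to the contracted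
vertex) decreases the minimum connected vertex cover size by at least `|C| - 2`:
for every connected vertex cover `X` of `G` there is a connected vertex cover `Y` of
the reduced graph with `|Y| + |C| ≤ |X| + 2`. -/
theorem stmt17 {V : Type} [Fintype V] (G : SimpleGraph V) (hG : G.Connected)
    (C : Set V) (hCcard : 2 ≤ C.ncard) (hC : G.IsClique C) :
    ∀ X : Set V, IsConnectedVertexCover G X →
      ∃ Y : Set (Option (Option {v : V // v ∉ C})),
        IsConnectedVertexCover (contractCliquePendant G C) Y ∧
        Y.ncard + C.ncard ≤ X.ncard + 2 := by
  intro X hX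
  obtain ⟨hXvc, hXconn⟩ := hX
  classical
  -- two distinct vertices of C
  obtain ⟨c, hc, d, hd, hcd⟩ := (Set.one_lt_ncard (Set.toFinite C)).mp hCcard
  have hadj : G.Adj c d := hC hc hd hcd
  obtain ⟨c0, hc0X, hc0C⟩ : ∃ c0, c0 ∈ X ∧ c0 ∈ C := by
    rcases hXvc hadj with h | h
    exacts [⟨c, h, hc⟩, ⟨d, h, hd⟩]
  set f : V → Option (Option {v : V // v ∉ C}) := fun v =>
    if h : v ∈ C then some none else some (some ⟨v, h⟩) with hf
  have hfC : ∀ v (hv : v ∈ C), f v = some none := fun v hv => dif_pos hv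
  have hfnC : ∀ v (hv : v ∉ C), f v = some (some ⟨v, hv⟩) := fun v hv => dif_neg hv
  have hbase : (some none : Option (Option {v : V // v ∉ C})) ∈ f '' X :=
    ⟨c0, hc0X, hfC c0 hc0C⟩
  refine ⟨f '' X, ⟨?_, ?_⟩, ?_⟩
  · -- vertex cover
    intro u v huv
    rw [contractCliquePendant, SimpleGraph.fromRel_adj] at huv
    obtain ⟨hne, h⟩ := huv
    have cover : ∀ x y : Option (Option {v : V // v ∉ C}),
        (match x, y with
          | some (some a), some (some b) => G.Adj a.1 b.1
          | some none, some (some a) => ∃ s ∈ C, G.Adj s a.1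
          | none, some none => True
          | _, _ => False) → x ∈ f '' X ∨ y ∈ f '' X := by
      rintro (_ | (_ | a)) (_ | (_ | b)) hxy
      · exact hxy.elim
      · exact Or.inr hbase
      · exact hxy.elim
      · exact hxy.elim
      · exact hxy.elim
      · exact Or.inl hbase
      · exact hxy.elim
      · exact hxy.elim
      · rcases hXvc hxy with h' | h'
        · exact Or.inl ⟨a.1, h', by rw [hfnC a.1 a.2]⟩
        · exact Or.inr ⟨b.1, h', by rw [hfnC b.1 b.2]⟩
    rcases h with h | h
    · exact cover u v h
    · exact (cover v u h).symm
  · -- connectivity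
    have key : ∀ p q : {x // x ∈ X}, (G.induce X).Adj p q →
        ((contractCliquePendant G C).induce (f '' X)).Reachable
          ⟨f p.1, Set.mem_image_of_mem f p.2⟩ ⟨f q.1, Set.mem_image_of_mem f q.2⟩ := by
      rintro ⟨p, hp⟩ ⟨q, hq⟩ hpq
      have hpq' : G.Adj p q := hpq
      have hne : p ≠ q := hpq'.ne
      by_cases hpC : p ∈ C <;> by_cases hqC : q ∈ C
      · have : (⟨f p, Set.mem_image_of_mem f hp⟩ :
            {x // x ∈ f '' X}) = ⟨f q, Set.mem_image_of_mem f hq⟩ :=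
          Subtype.ext (by show f p = f q; rw [hfC p hpC, hfC q hqC])
        rw [this]
      · refine SimpleGraph.Adj.reachable ?_
        show (contractCliquePendant G C).Adj (f p) (f q)
        rw [hfC p hpC, hfnC q hqC, contractCliquePendant, SimpleGraph.fromRel_adj]
        exact ⟨by simp, Or.inl ⟨p, hpC, hpq'⟩⟩
      · refine SimpleGraph.Adj.reachable ?_
        show (contractCliquePendant G C).Adj (f p) (f q)
        rw [hfC q hqC, hfnC p hpC, contractCliquePendant, SimpleGraph.fromRel_adj]
        exact ⟨by simp, Or.inr ⟨q, hqC, hpq'.symm⟩⟩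
      · refine SimpleGraph.Adj.reachable ?_
        show (contractCliquePendant G C).Adj (f p) (f q)
        rw [hfnC p hpC, hfnC q hqC, contractCliquePendant, SimpleGraph.fromRel_adj]
        exact ⟨by simp [hne], Or.inl hpq'⟩
    rw [SimpleGraph.connected_iff]
    constructor
    · rintro ⟨y, hy⟩ ⟨z, hz⟩
      obtain ⟨a, haX, rfl⟩ := hy
      obtain ⟨b, hbX, rfl⟩ := hz
      have hre : (G.induce X).Reachable ⟨a, haX⟩ ⟨b, hbX⟩ := hXconn.preconnected _ _
      rw [SimpleGraph.reachable_iff_reflTransGen] at hre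
      have := Relation.ReflTransGen.lift'
        (f := fun p : {x // x ∈ X} => (⟨f p.1, Set.mem_image_of_mem f p.2⟩ :
          {x // x ∈ f '' X}))
        (fun p q h => (SimpleGraph.reachable_iff_reflTransGen _ _).mp (key p q h)) _ _ hre
      exact (SimpleGraph.reachable_iff_reflTransGen _ _).mpr this
    · exact ⟨⟨_, hbase⟩⟩
  · -- cardinality
    have h1 : (f '' X).ncard ≤ (X \ C).ncard + 1 := by
      have hsub : f '' X ⊆ insert (some none) (f '' (X \ C)) := by
        rintro _ ⟨a, ha, rfl⟩
        by_cases haC : a ∈ C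
        · rw [hfC a haC]; exact Set.mem_insert _ _
        · exact Set.mem_insert_of_mem _ ⟨a, ⟨ha, haC⟩, rfl⟩
      calc (f '' X).ncard ≤ (insert (some none) (f '' (X \ C))).ncard :=
            Set.ncard_le_ncard hsub (Set.toFinite _)
        _ ≤ (f '' (X \ C)).ncard + 1 := Set.ncard_insert_le _ _
        _ = (X \ C).ncard + 1 := by
            congr 1
            apply Set.ncard_image_of_injOn
            rintro a ⟨-, haC⟩ b ⟨-, hbC⟩ hab
            rw [hfnC a haC, hfnC b hbC] at hab
            simpa using hab
    have h2 : (C \ X).ncard ≤ 1 := by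
      rw [Set.ncard_le_one (Set.toFinite _)]
      intro a ha b hb
      by_contra hne
      rcases hXvc (hC ha.1 hb.1 hne) with h | h
      exacts [ha.2 h, hb.2 h]
    have h3 : (X \ C).ncard + (X ∩ C).ncard = X.ncard := by
      rw [← Set.diff_self_inter]
      exact Set.ncard_diff_add_ncard_of_subset Set.inter_subset_left (Set.toFinite _)
    have h4 : (C \ X).ncard + (C ∩ X).ncard = C.ncard := by
      rw [← Set.diff_self_inter]
      exact Set.ncard_diff_add_ncard_of_subset Set.inter_subset_left (Set.toFinite _)
    have h5 : (C ∩ X).ncard = (X ∩ C).ncard := by rw [Set.inter_comm]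
    omega
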